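/- Suppose F ⊆ ω^ω × ω^ω × ℝ is a Borel set and U, V ⊆ ω^ω are basic open sets such that: (a) the set of (x,y) ∈ U × V with empty section F_{(x,y)} is meager; (b) the set of (x,y) ∈ U × V with uncountable section F_{(x,y)} is meager; (c) for each z ∈ ℝ the section F^z = {(x,y) : (x,y,z) ∈ F} is meager. Then there is a perfect set P ⊆ U × V such that every (x,y) ∈ P has nonempty section F_{(x,y)}, and for distinct (x',y'), (x'',y'') ∈ P the sections F_{(x',y')} and F_{(x'',y'')} are disjoint and x' ≠ x''. -/

import Mathlib

open Set Topology TopologicalSpace Function Filter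

section basics
variable {α : Type*} [TopologicalSpace α]

lemma myIsMeagre_sUnion {S : Set (Set α)} (hc : S.Countable)
    (h : ∀ s ∈ S, IsMeagre s) : IsMeagre (⋃₀ S) := by
  rw [IsMeagre, Set.compl_sUnion]
  exact (countable_sInter_mem (hc.image _)).2 (by
    rintro t ⟨s, hs, rfl⟩
    exact h s hs)

lemma myIsMeagre_biUnion {ι : Type*} {t : Set ι} (ht : t.Countable) {f : ι → Set α}
    (h : ∀ i ∈ t, IsMeagre (f i)) : IsMeagre (⋃ i ∈ t, f i) := by
  rw [← Set.sUnion_image]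
  exact myIsMeagre_sUnion (ht.image _) (by rintro s ⟨i, hi, rfl⟩; exact h i hi)

lemma myIsMeagre_union {s t : Set α} (hs : IsMeagre s) (ht : IsMeagre t) :
    IsMeagre (s ∪ t) := by
  rw [IsMeagre, Set.compl_union]
  exact Filter.inter_mem hs ht

lemma isOpen_empty_of_isMeagre [BaireSpace α] {s : Set α} (ho : IsOpen s)
    (hm : IsMeagre s) : s = ∅ := by
  rcases Set.eq_empty_or_nonempty s with h | h
  · exact h
  · exfalso
    have hd : Dense sᶜ := dense_of_mem_residual hm
    rcases hd.inter_open_nonempty s ho h with ⟨x, hx, hxc⟩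
    exact hxc hx

/-- Baire hull: every set in a second countable space has a minimal (mod meager)
Baire-measurable superset contained in its closure. -/
lemma exists_baire_hull [SecondCountableTopology α] (S : Set α) :
    ∃ B : Set α, S ⊆ B ∧ B ⊆ closure S ∧ BaireMeasurableSet B ∧
      ∀ C : Set α, BaireMeasurableSet C → S ⊆ C → IsMeagre (B \ C) := by
  classical
  set 𝒱 : Set (Set α) := {V ∈ countableBasis α | IsMeagre (V ∩ S)} with h𝒱
  set Uu : Set α := ⋃₀ 𝒱 with hUu
  have hUS : IsMeagre (Uu ∩ S) := by
    have : Uu ∩ S = ⋃₀ ((fun V => V ∩ S) '' 𝒱) := by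
      rw [hUu]; ext x; simp [Set.mem_sUnion]; tauto
    rw [this]
    refine myIsMeagre_sUnion (((countable_countableBasis α).mono (by exact fun V hV => hV.1)).image _) ?_
    rintro t ⟨V, hV, rfl⟩
    exact hV.2
  have key : ∀ O : Set α, IsOpen O → IsMeagre (O ∩ S) → O ⊆ Uu := by
    intro O hO hm x hx
    rcases (isBasis_countableBasis α).exists_subset_of_mem_open hx hO with ⟨V, hVb, hxV, hVO⟩
    exact ⟨V, ⟨hVb, hm.mono (by gcongr)⟩, hxV⟩
  refine ⟨(closure S ∩ Uuᶜ) ∪ (S ∩ Uu), ?_, ?_, ?_, ?_⟩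
  · intro x hx
    by_cases h : x ∈ Uu
    · exact Or.inr ⟨hx, h⟩
    · exact Or.inl ⟨subset_closure hx, h⟩
  · rintro x (⟨h, -⟩ | ⟨h, -⟩)
    · exact h
    · exact subset_closure h
  · refine BaireMeasurableSet.union ?_ ?_
    · exact (isClosed_closure.isOpen_compl.baireMeasurableSet.of_compl).inter
        (by
          have : IsOpen Uu := isOpen_sUnion fun V hV => isOpen_of_mem_countableBasis hV.1
          exact this.isClosed_compl.isOpen_compl.baireMeasurableSet.of_compl)
    · exact (hUS.mono (by exact Set.inter_comm S Uu ▸ Set.Subset.rfl)).baireMeasurableSet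
  · intro C hC hSC
    rcases hC.compl.residualEq_isOpen with ⟨O, hO, hCO⟩
    have hsymm : IsMeagre ((Cᶜ \ O) ∪ (O \ Cᶜ)) := by
      rw [IsMeagre]
      have := hCO
      rw [Filter.eventuallyEq_set] at this
      refine Filter.mem_of_superset this ?_
      intro x hx
      simp only [Set.mem_setOf_eq] at hx
      simp only [Set.mem_compl_iff, Set.mem_union, Set.mem_diff, Set.mem_compl_iff]
      tauto
    have hOS : IsMeagre (O ∩ S) := by
      refine (hsymm.mono ?_ : IsMeagre _)
      intro x ⟨hxO, hxS⟩
      exact Or.inr ⟨hxO, fun hc => hc (hSC hxS)⟩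
    have hOU : O ⊆ Uu := key O hO hOS
    refine hsymm.mono ?_
    rintro x ⟨(⟨-, hxU⟩ | ⟨hxS, -⟩), hxC⟩
    · exact Or.inl ⟨hxC, fun hxO => hxU (hOU hxO)⟩
    · exact absurd (hSC hxS) hxC
end basics

open Set Topology TopologicalSpace Function Filter

namespace DST17

/-- The basic clopen subset of Baire space given by a finite prefix. -/
def cyl (l : List ℕ) : Set (ℕ → ℕ) := {x | ∀ i < l.length, x i = l.getD i 0}

def seg (x : ℕ → ℕ) (n : ℕ) : List ℕ := (List.range n).map x

@[simp] lemma seg_length (x : ℕ → ℕ) (n : ℕ) : (seg x n).length = n := by simp [seg]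

lemma seg_getD (x : ℕ → ℕ) {i n : ℕ} (h : i < n) : (seg x n).getD i 0 = x i := by
  rw [List.getD_eq_getElem _ _ (by simpa using h)]
  simp [seg]

lemma cyl_seg (x : ℕ → ℕ) (n : ℕ) : cyl (seg x n) = PiNat.cylinder x n := by
  ext y
  simp only [cyl, PiNat.mem_cylinder_iff, Set.mem_setOf_eq, seg_length]
  exact ⟨fun h i hi => (h i hi).trans (seg_getD x hi), fun h i hi => (h i hi).trans (seg_getD x hi).symm⟩

lemma pt_mem_cyl (l : List ℕ) : (fun i => l.getD i 0) ∈ cyl l := fun _ _ => rfl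

lemma cyl_nonempty (l : List ℕ) : (cyl l).Nonempty := ⟨_, pt_mem_cyl l⟩

lemma cyl_eq_cylinder {l : List ℕ} {y : ℕ → ℕ} (hy : y ∈ cyl l) :
    cyl l = PiNat.cylinder y l.length := by
  ext z
  simp only [cyl, PiNat.mem_cylinder_iff, Set.mem_setOf_eq]
  exact ⟨fun h i hi => (h i hi).trans (hy i hi).symm, fun h i hi => (h i hi).trans (hy i hi)⟩

lemma isOpen_cyl (l : List ℕ) : IsOpen (cyl l) := by
  rw [cyl_eq_cylinder (pt_mem_cyl l)]
  exact PiNat.isOpen_cylinder _ _ _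

lemma cyl_nil : cyl ([] : List ℕ) = Set.univ := by
  ext x; simp [cyl]

lemma cyl_append_subset (l : List ℕ) (j : ℕ) : cyl (l ++ [j]) ⊆ cyl l := by
  intro x hx i hi
  have := hx i (by simp; omega)
  rwa [List.getD_append _ _ _ _ hi] at this

lemma cyl_eq_iUnion_append (l : List ℕ) : cyl l = ⋃ j : ℕ, cyl (l ++ [j]) := by
  ext x
  constructor
  · intro hx
    refine Set.mem_iUnion.2 ⟨x l.length, fun i hi => ?_⟩
    simp only [List.length_append, List.length_singleton] at hi
    rcases Nat.lt_or_ge i l.length with h | h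
    · rw [List.getD_append _ _ _ _ h]; exact hx i h
    · have : i = l.length := by omega
      subst this
      rw [List.getD_append_right _ _ _ _ h]
      simp
  · rintro ⟨_, ⟨j, rfl⟩, hx⟩
    exact cyl_append_subset l j hx

/-- A cylinder agrees with a sub-cylinder of greater length on its domain. -/
lemma cyl_subset_agree {l l' : List ℕ} (h : cyl l' ⊆ cyl l) (hlen : l.length ≤ l'.length) :
    ∀ i < l.length, l'.getD i 0 = l.getD i 0 := by
  intro i hi
  have := h (pt_mem_cyl l') i hi
  exact this

/-- Every analytic set in a second countable T2 space has the Baire property. -/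
theorem analyticSet_baireMeasurableSet {α : Type*} [TopologicalSpace α] [T2Space α]
    [SecondCountableTopology α] {A : Set α} (hA : MeasureTheory.AnalyticSet A) :
    BaireMeasurableSet A := by
  classical
  rw [MeasureTheory.AnalyticSet] at hA
  rcases hA with rfl | ⟨f, hf, rfl⟩
  · exact isOpen_empty.baireMeasurableSet
  choose B hB1 hB2 hB3 hB4 using fun l : List ℕ => exists_baire_hull (f '' cyl l)
  set M : Set α := ⋃ l : List ℕ, (B l \ ⋃ j : ℕ, B (l ++ [j])) with hMdef
  have hM : IsMeagre M := by
    have : M = ⋃ l ∈ (Set.univ : Set (List ℕ)), (B l \ ⋃ j : ℕ, B (l ++ [j])) := by simp [hMdef]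
    rw [this]
    refine myIsMeagre_biUnion (Set.countable_univ) ?_
    intro l _
    refine hB4 l _ (BaireMeasurableSet.iUnion (fun j => hB3 _)) ?_
    rw [show cyl l = ⋃ j : ℕ, cyl (l ++ [j]) from cyl_eq_iUnion_append l, Set.image_iUnion]
    exact Set.iUnion_mono fun j => hB1 _
  have hsub : B [] \ M ⊆ Set.range f := by
    rintro x ⟨hx0, hxM⟩
    have step : ∀ l : List ℕ, x ∈ B l → ∃ j, x ∈ B (l ++ [j]) := by
      intro l hxl
      by_contra h
      push_neg at h
      exact hxM (Set.mem_iUnion.2 ⟨l, hxl, fun hm => by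
        rcases Set.mem_iUnion.1 hm with ⟨j, hj⟩
        exact h j hj⟩)
    -- build the branch
    let G : ∀ n : ℕ, {l : List ℕ // x ∈ B l ∧ l.length = n} := fun n =>
      Nat.rec ⟨[], hx0, rfl⟩
        (fun _ p => ⟨p.1 ++ [(step p.1 p.2.1).choose], (step p.1 p.2.1).choose_spec,
          by simp [p.2.2]⟩) n
    have hGchain : ∀ n, ∃ j, (G (n + 1)).1 = (G n).1 ++ [j] := fun n => ⟨_, rfl⟩
    set y : ℕ → ℕ := fun i => (G (i + 1)).1.getD i 0 with hy
    have hstable : ∀ n i, i < n → (G n).1.getD i 0 = y i := by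
      intro n
      induction n with
      | zero => omega
      | succ n ih =>
        intro i hi
        rcases Nat.lt_or_ge i n with h | h
        · rcases hGchain n with ⟨j, hj⟩
          rw [hj, List.getD_append _ _ _ _ (by rw [(G n).2.2]; exact h)]
          exact ih i h
        · have : i = n := by omega
          subst this
          rfl
    have hycyl : ∀ n, cyl (G n).1 = PiNat.cylinder y n := by
      intro n
      have hyc : y ∈ cyl (G n).1 := by
        intro i hi
        rw [(G n).2.2] at hi
        exact (hstable n i hi).symm
      rw [cyl_eq_cylinder hyc, (G n).2.2]
    have hxcl : ∀ n, x ∈ closure (f '' PiNat.cylinder y n) := by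
      intro n
      rw [← hycyl n]
      exact hB2 _ (G n).2.1
    -- x = f y by T2
    refine ⟨y, ?_⟩
    by_contra hne
    rcases t2_separation (Ne.symm hne) with ⟨u, v, hu, hv, hxu, hfyv, huv⟩
    obtain ⟨n, hn⟩ : ∃ n, PiNat.cylinder y n ⊆ f ⁻¹' v := by
      have : f ⁻¹' v ∈ nhds y := hf.continuousAt.preimage_mem_nhds (hv.mem_nhds hfyv)
      rcases (PiNat.isTopologicalBasis_cylinders (fun _ : ℕ => ℕ)).mem_nhds_iff.1 this with
        ⟨s, ⟨z, n, rfl⟩, hys, hsv⟩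
      refine ⟨n, ?_⟩
      have : PiNat.cylinder z n = PiNat.cylinder y n := by
        ext w
        simp only [PiNat.mem_cylinder_iff]
        exact ⟨fun h i hi => (h i hi).trans (hys i hi).symm, fun h i hi => (h i hi).trans (hys i hi)⟩
      rwa [this] at hsv
    have : x ∈ closure v := closure_mono (by
      rintro _ ⟨w, hw, rfl⟩
      exact hn hw) (hxcl n)
    have : x ∈ closure v ∩ u := ⟨this, hxu⟩
    rcases mem_closure_iff.1 this.1 u hu this.2 with ⟨w, hwu, hwv⟩
    exact Set.disjoint_left.1 huv hwu hwv
  have hAB : Set.range f ⊆ B [] := by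
    have := hB1 []
    rwa [cyl_nil, Set.image_univ] at this
  refine (hB3 []).congr ?_
  rw [Filter.eventuallyEq_set]
  refine Filter.mem_of_superset hM ?_
  intro x hx
  simp only [Set.mem_compl_iff] at hx
  exact ⟨fun h => hsub ⟨h, hx⟩, fun h => hAB h⟩

end DST17
section KU
open Set Topology TopologicalSpace Function Filter

variable {X Y : Type*} [TopologicalSpace X] [TopologicalSpace Y]

theorem residual_sections_meager [SecondCountableTopology Y] {M : Set (X × Y)}
    (hM : IsMeagre M) : ∃ R ∈ residual X, ∀ x ∈ R, IsMeagre {y | (x, y) ∈ M} := by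
  classical
  rcases (isMeagre_iff_countable_union_isNowhereDense).1 hM with ⟨S, hSnwd, hScnt, hScov⟩
  set 𝒱 : Set (Set Y) := {V ∈ countableBasis Y | V.Nonempty} with h𝒱
  set G : Set (X × Y) → Set Y → Set X := fun t V => {x | ∃ y ∈ V, (x, y) ∉ closure t} with hG
  have hGopen : ∀ t V, IsOpen V → IsOpen (G t V) := by
    intro t V hV
    have : G t V = Prod.fst '' ((closure t)ᶜ ∩ (Set.univ ×ˢ V)) := by
      ext x
      constructor
      · rintro ⟨y, hyV, hy⟩
        exact ⟨(x, y), ⟨hy, ⟨trivial, hyV⟩⟩, rfl⟩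
      · rintro ⟨⟨a, b⟩, ⟨hab, ⟨-, hbV⟩⟩, rfl⟩
        exact ⟨b, hbV, hab⟩
    rw [this]
    exact isOpenMap_fst _ (isClosed_closure.isOpen_compl.inter (isOpen_univ.prod hV))
  have hGdense : ∀ t ∈ S, ∀ V ∈ 𝒱, Dense (G t V) := by
    rintro t htS V ⟨hVb, hVne⟩
    rw [dense_iff_inter_open]
    rintro U₀ hU₀ ⟨a, ha⟩
    have hdc : Dense (closure t)ᶜ := by
      rw [← interior_eq_empty_iff_dense_compl]
      simpa [IsNowhereDense, closure_closure] using (hSnwd t htS)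
    rcases hdc.inter_open_nonempty (U₀ ×ˢ V) (hU₀.prod (isOpen_of_mem_countableBasis hVb))
        (by
          rcases hVne with ⟨b, hb⟩
          exact ⟨(a, b), ha, hb⟩) with ⟨⟨c, d⟩, hcd1, hcd2⟩
    exact ⟨c, hcd1.1, ⟨d, hcd1.2, hcd2⟩⟩
  set R : Set X := ⋂ t ∈ S, ⋂ V ∈ 𝒱, G t V with hR
  have hRres : R ∈ residual X := by
    refine (countable_bInter_mem hScnt).2 fun t ht => ?_
    refine (countable_bInter_mem ((countable_countableBasis Y).mono fun V hV => hV.1)).2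
      fun V hV => ?_
    exact residual_of_dense_open (hGopen t V (isOpen_of_mem_countableBasis hV.1)) (hGdense t ht V hV)
  refine ⟨R, hRres, fun x hx => ?_⟩
  rw [isMeagre_iff_countable_union_isNowhereDense]
  refine ⟨(fun t => {y | (x, y) ∈ closure t}) '' S, ?_, hScnt.image _, ?_⟩
  · rintro _ ⟨t, htS, rfl⟩
    have hcl : IsClosed {y | (x, y) ∈ closure t} :=
      isClosed_closure.preimage (Continuous.prodMk_right x)
    rw [IsNowhereDense, hcl.closure_eq]
    by_contra h
    rcases Set.eq_empty_or_nonempty (interior {y | (x, y) ∈ closure t}) with h' | ⟨z, hz⟩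
    · exact h h'
    rcases (isBasis_countableBasis Y).exists_subset_of_mem_open hz isOpen_interior with
      ⟨V, hVb, hzV, hVsub⟩
    have hV𝒱 : V ∈ 𝒱 := ⟨hVb, ⟨z, hzV⟩⟩
    have hxG : x ∈ G t V := by
      have := Set.mem_iInter₂.1 (Set.mem_iInter₂.1 hx t htS) V hV𝒱
      exact this
    rcases hxG with ⟨y, hyV, hy⟩
    have hmem : y ∈ {y | (x, y) ∈ closure t} :=
      interior_subset (s := {y | (x, y) ∈ closure t}) (hVsub hyV)
    exact hy hmem
  · intro y hy
    have hy' : (x, y) ∈ M := hy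
    rcases hScov hy' with ⟨t, htS, hyt⟩
    exact ⟨{y | (x, y) ∈ closure t}, ⟨t, htS, rfl⟩, subset_closure hyt⟩

theorem meager_of_baireMeasurable_sections [SecondCountableTopology Y] [BaireSpace X] [BaireSpace Y]
    {M : Set (X × Y)} (hBP : BaireMeasurableSet M) {T : Set X} (hT : IsMeagre T)
    (hsec : ∀ x ∉ T, IsMeagre {y | (x, y) ∈ M}) : IsMeagre M := by
  rcases hBP.residualEq_isOpen with ⟨O, hO, hMO⟩
  have hD : IsMeagre ((M \ O) ∪ (O \ M)) := by
    rw [IsMeagre]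
    rw [Filter.eventuallyEq_set] at hMO
    refine Filter.mem_of_superset hMO ?_
    intro x hx
    simp only [Set.mem_setOf_eq] at hx
    simp only [Set.mem_compl_iff, Set.mem_union, Set.mem_diff]
    tauto
  rcases residual_sections_meager hD with ⟨R, hRres, hRsec⟩
  have hOempty : O = ∅ := by
    by_contra h
    rcases Set.eq_empty_or_nonempty O with h' | ⟨⟨a, b⟩, hab⟩
    · exact h h'
    rcases mem_nhds_prod_iff'.1 (hO.mem_nhds hab) with ⟨U₁, V₁, hU₁, haU₁, hV₁, hbV₁, hUV⟩
    have hkey : ∀ x, x ∈ R → x ∉ T → {y | (x, y) ∈ O} = ∅ := by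
      intro x hxR hxT
      refine isOpen_empty_of_isMeagre (hO.preimage (Continuous.prodMk_right x)) ?_
      have : {y | (x, y) ∈ O} ⊆ {y | (x, y) ∈ M} ∪ {y | (x, y) ∈ (M \ O) ∪ (O \ M)} := by
        intro y hy
        by_cases hM : (x, y) ∈ M
        · exact Or.inl hM
        · exact Or.inr (Or.inr ⟨hy, hM⟩)
      exact (myIsMeagre_union (hsec x hxT) (hRsec x hxR)).mono this
    have hU₁sub : U₁ ⊆ (R ∩ Tᶜ)ᶜ := by
      intro x hxU hxRT
      have : b ∈ ({y | (x, y) ∈ O} : Set Y) := hUV ⟨hxU, hbV₁⟩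
      rw [hkey x hxRT.1 hxRT.2] at this
      exact this
    have hmea : IsMeagre U₁ := by
      refine IsMeagre.mono hU₁sub ?_
      rw [IsMeagre, compl_compl]
      exact Filter.inter_mem hRres hT
    have := isOpen_empty_of_isMeagre hU₁ hmea
    rw [this] at haU₁
    exact haU₁
  refine hD.mono ?_
  intro p hp
  by_cases h : p ∈ O
  · rw [hOempty] at h; exact h.elim
  · exact Or.inl ⟨hp, h⟩

end KU
namespace DST17
open Set Topology TopologicalSpace Function Filter

abbrev XX := (ℕ → ℕ) × (ℕ → ℕ)

instance : PolishSpace XX := inferInstance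
instance : PolishSpace (XX × XX) := {}
instance : PolishSpace ((XX × XX) × ℝ) := {}
instance : BorelSpace (XX × XX) := Prod.borelSpace
instance : BorelSpace ((XX × XX) × ℝ) := Prod.borelSpace

abbrev Box := List ℕ × List ℕ

def bset (c : Box) : Set XX := cyl c.1 ×ˢ cyl c.2

lemma bset_nonempty (c : Box) : (bset c).Nonempty :=
  (cyl_nonempty c.1).prod (cyl_nonempty c.2)

lemma isOpen_bset (c : Box) : IsOpen (bset c) := (isOpen_cyl c.1).prod (isOpen_cyl c.2)

lemma exists_cylinder_subset {E : ℕ → Type*} [∀ n, TopologicalSpace (E n)]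
    [∀ n, DiscreteTopology (E n)] {U : Set (∀ n, E n)} {x : ∀ n, E n} (h : U ∈ 𝓝 x) :
    ∃ n, PiNat.cylinder x n ⊆ U := by
  rcases (PiNat.isTopologicalBasis_cylinders E).mem_nhds_iff.1 h with
    ⟨s, ⟨z, n, rfl⟩, hys, hsv⟩
  refine ⟨n, ?_⟩
  have : PiNat.cylinder z n = PiNat.cylinder x n := by
    ext w
    simp only [PiNat.mem_cylinder_iff]
    exact ⟨fun h i hi => (h i hi).trans (hys i hi).symm, fun h i hi => (h i hi).trans (hys i hi)⟩
  rwa [this] at hsv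

lemma exists_box_subset {G : Set XX} (hG : IsOpen G) {p : XX} (hp : p ∈ G) (L : ℕ) :
    ∃ c : Box, p ∈ bset c ∧ bset c ⊆ G ∧ L ≤ c.1.length ∧ L ≤ c.2.length := by
  rcases mem_nhds_prod_iff'.1 (hG.mem_nhds hp) with ⟨U₁, V₁, hU₁, hpU₁, hV₁, hpV₁, hsub⟩
  rcases exists_cylinder_subset (hU₁.mem_nhds hpU₁) with ⟨n₁, hn₁⟩
  rcases exists_cylinder_subset (hV₁.mem_nhds hpV₁) with ⟨n₂, hn₂⟩
  refine ⟨(seg p.1 (max n₁ L), seg p.2 (max n₂ L)), ?_, ?_, ?_, ?_⟩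
  · constructor
    · rw [cyl_seg]; exact PiNat.self_mem_cylinder _ _
    · rw [cyl_seg]; exact PiNat.self_mem_cylinder _ _
  · intro q hq
    rcases hq with ⟨hq1, hq2⟩
    rw [cyl_seg] at hq1 hq2
    refine hsub ⟨hn₁ (PiNat.cylinder_anti _ (le_max_left _ _) hq1),
      hn₂ (PiNat.cylinder_anti _ (le_max_left _ _) hq2)⟩
  · simp
  · simp

lemma nonempty_open_diff_nwd {β : Type*} [TopologicalSpace β] {G A : Set β} (hG : IsOpen G)
    (hGne : G.Nonempty) (hAi : interior A = ∅) : (G \ A).Nonempty := by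
  rcases Set.eq_empty_or_nonempty (G \ A) with h | h
  · exfalso
    have : G ⊆ A := by
      intro x hx
      by_contra hxA
      exact (Set.eq_empty_iff_forall_notMem.1 h) x ⟨hx, hxA⟩
    have : G ⊆ interior A := hG.subset_interior_iff.2 this
    rw [hAi] at this
    rcases hGne with ⟨x, hx⟩
    exact this hx
  · exact h

lemma shrink_box_avoid (c : Box) {A : Set XX} (hAi : interior A = ∅) (hAc : IsClosed A) (L : ℕ) :
    ∃ c' : Box, bset c' ⊆ bset c ∧ bset c' ∩ A = ∅ ∧ L ≤ c'.1.length ∧ L ≤ c'.2.length := by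
  rcases nonempty_open_diff_nwd (isOpen_bset c) (bset_nonempty c) hAi with ⟨p, hpG, hpA⟩
  rcases exists_box_subset ((isOpen_bset c).inter hAc.isOpen_compl) ⟨hpG, hpA⟩ L with
    ⟨c', hpc', hc'sub, hL1, hL2⟩
  refine ⟨c', fun q hq => (hc'sub hq).1, ?_, hL1, hL2⟩
  rw [Set.eq_empty_iff_forall_notMem]
  rintro q ⟨hq, hqA⟩
  exact (hc'sub hq).2 hqA

lemma shrink_box_pair (c d : Box) {B : Set (XX × XX)} (hBi : interior B = ∅)
    (hBc : IsClosed B) (L : ℕ) :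
    ∃ c' d' : Box, bset c' ⊆ bset c ∧ bset d' ⊆ bset d ∧
      (bset c' ×ˢ bset d') ∩ B = ∅ ∧
      L ≤ c'.1.length ∧ L ≤ c'.2.length ∧ L ≤ d'.1.length ∧ L ≤ d'.2.length := by
  have hGopen : IsOpen ((bset c ×ˢ bset d) \ B) :=
    ((isOpen_bset c).prod (isOpen_bset d)).inter hBc.isOpen_compl
  rcases nonempty_open_diff_nwd ((isOpen_bset c).prod (isOpen_bset d))
    ((bset_nonempty c).prod (bset_nonempty d)) hBi with ⟨⟨p, q⟩, hpq⟩
  rcases mem_nhds_prod_iff'.1 (hGopen.mem_nhds hpq) with ⟨U₁, V₁, hU₁, hpU₁, hV₁, hqV₁, hsub⟩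
  rcases exists_box_subset hU₁ hpU₁ L with ⟨c', hpc', hc'U, hL1, hL2⟩
  rcases exists_box_subset hV₁ hqV₁ L with ⟨d', hqd', hd'V, hL3, hL4⟩
  have hprod : bset c' ×ˢ bset d' ⊆ (bset c ×ˢ bset d) \ B := by
    rintro ⟨a, b⟩ ⟨ha, hb⟩
    exact hsub ⟨hc'U ha, hd'V hb⟩
  refine ⟨c', d', ?_, ?_, ?_, hL1, hL2, hL3, hL4⟩
  · intro a ha
    rcases bset_nonempty d' with ⟨b, hb⟩
    exact (hprod (Set.mk_mem_prod ha hb)).1.1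
  · intro b hb
    rcases bset_nonempty c' with ⟨a, ha⟩
    exact (hprod (Set.mk_mem_prod ha hb)).1.2
  · rw [Set.eq_empty_iff_forall_notMem]
    rintro w ⟨hw, hwB⟩
    exact (hprod hw).2 hwB

lemma refine_boxes {ι : Type} [Fintype ι] [DecidableEq ι] (C : ι → Box)
    {A : Set XX} (hAi : interior A = ∅) (hAc : IsClosed A)
    {B : Set (XX × XX)} (hBi : interior B = ∅) (hBc : IsClosed B) (L : ℕ) :
    ∃ C' : ι → Box,
      (∀ i, bset (C' i) ⊆ bset (C i)) ∧
      (∀ i, L ≤ (C' i).1.length ∧ L ≤ (C' i).2.length) ∧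
      (∀ i, bset (C' i) ∩ A = ∅) ∧
      (∀ i j, i ≠ j → (bset (C' i) ×ˢ bset (C' j)) ∩ B = ∅) := by
  classical
  -- stage 1: avoid A and get lengths
  choose C₁ hC₁sub hC₁A hC₁L1 hC₁L2 using fun i => shrink_box_avoid (C i) hAi hAc L
  -- stage 2: handle pairs by induction over a finite set of pairs
  have stage2 : ∀ T : Finset (ι × ι), ∃ C' : ι → Box,
      (∀ i, bset (C' i) ⊆ bset (C₁ i)) ∧
      (∀ i, L ≤ (C' i).1.length ∧ L ≤ (C' i).2.length) ∧
      (∀ p ∈ T, p.1 ≠ p.2 → (bset (C' p.1) ×ˢ bset (C' p.2)) ∩ B = ∅) := by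
    intro T
    induction T using Finset.induction_on with
    | empty =>
      exact ⟨C₁, fun i => Set.Subset.rfl, fun i => ⟨hC₁L1 i, hC₁L2 i⟩, fun p hp => absurd hp (Finset.notMem_empty p)⟩
    | @insert p T hpT ih =>
      rcases ih with ⟨C', hC'sub, hC'L, hC'pairs⟩
      rcases p with ⟨i, j⟩
      by_cases hij : i = j
      · refine ⟨C', hC'sub, hC'L, ?_⟩
        rintro q hq hq12
        rcases Finset.mem_insert.1 hq with rfl | hqT
        · exact absurd hij hq12
        · exact hC'pairs q hqT hq12
      · rcases shrink_box_pair (C' i) (C' j) hBi hBc L with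
          ⟨c'', d'', hc''sub, hd''sub, hB'', hL1, hL2, hL3, hL4⟩
        set C'' : ι → Box := Function.update (Function.update C' i c'') j d'' with hC''
        have hC''i : C'' i = c'' := by
          rw [hC'', Function.update_of_ne hij, Function.update_self]
        have hC''j : C'' j = d'' := by
          rw [hC'', Function.update_self]
        have hC''sub : ∀ k, bset (C'' k) ⊆ bset (C' k) := by
          intro k
          by_cases hk : k = j
          · subst hk; rw [hC''j]; exact hd''sub
          · rw [hC'', Function.update_of_ne hk]
            by_cases hk' : k = i
            · subst hk'; rw [Function.update_self]; exact hc''sub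
            · rw [Function.update_of_ne hk']
        refine ⟨C'', fun k => (hC''sub k).trans (hC'sub k), ?_, ?_⟩
        · intro k
          by_cases hk : k = j
          · subst hk; rw [hC''j]; exact ⟨hL3, hL4⟩
          · rw [hC'', Function.update_of_ne hk]
            by_cases hk' : k = i
            · subst hk'; rw [Function.update_self]; exact ⟨hL1, hL2⟩
            · rw [Function.update_of_ne hk']; exact hC'L k
        · rintro q hq hq12
          rcases Finset.mem_insert.1 hq with rfl | hqT
          · rw [hC''i, hC''j]; exact hB''
          · have hmono : (bset (C'' q.1) ×ˢ bset (C'' q.2)) ⊆ (bset (C' q.1) ×ˢ bset (C' q.2)) :=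
              Set.prod_mono (hC''sub q.1) (hC''sub q.2)
            rw [Set.eq_empty_iff_forall_notMem]
            rintro w ⟨hw, hwB⟩
            exact (Set.eq_empty_iff_forall_notMem.1 (hC'pairs q hqT hq12)) w ⟨hmono hw, hwB⟩
  rcases stage2 (Finset.univ.filter (fun p : ι × ι => p.1 ≠ p.2)) with ⟨C', h1, h2, h3⟩
  refine ⟨C', fun i => (h1 i).trans (hC₁sub i), h2, ?_, ?_⟩
  · intro i
    rw [Set.eq_empty_iff_forall_notMem]
    rintro w ⟨hw, hwA⟩
    exact (Set.eq_empty_iff_forall_notMem.1 (hC₁A i)) w ⟨h1 i hw, hwA⟩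
  · intro i j hij
    exact h3 (i, j) (Finset.mem_filter.2 ⟨Finset.mem_univ _, hij⟩) hij

end DST17
namespace DST17
open Set Topology TopologicalSpace Function Filter

lemma cyl_subset_agree' {l l' : List ℕ} (h : cyl l' ⊆ cyl l) :
    ∀ i < l.length, i < l'.length ∧ l'.getD i 0 = l.getD i 0 := by
  intro i hi
  have hilt : i < l'.length := by
    by_contra hge
    push_neg at hge
    set q : ℕ → ℕ := Function.update (fun j => l'.getD j 0) i (l.getD i 0 + 1) with hq
    have hq' : q ∈ cyl l' := by
      intro j hj
      rw [hq, Function.update_of_ne (by omega : j ≠ i)]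
    have := h hq' i hi
    rw [hq, Function.update_self] at this
    omega
  exact ⟨hilt, h (pt_mem_cyl l') i hi⟩

lemma bset_subset_components {c d : Box} (h : bset c ⊆ bset d) :
    cyl c.1 ⊆ cyl d.1 ∧ cyl c.2 ⊆ cyl d.2 := by
  constructor
  · intro a ha
    rcases cyl_nonempty c.2 with ⟨b, hb⟩
    exact (h (Set.mk_mem_prod ha hb)).1
  · intro b hb
    rcases cyl_nonempty c.1 with ⟨a, ha⟩
    exact (h (Set.mk_mem_prod ha hb)).2

theorem mycielski_boxes (W : Box) (A : ℕ → Set XX) (B : ℕ → Set (XX × XX))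
    (hAc : ∀ k, IsClosed (A k)) (hAi : ∀ k, interior (A k) = ∅)
    (hBc : ∀ k, IsClosed (B k)) (hBi : ∀ k, interior (B k) = ∅)
    (hBm : ∀ k, B k ⊆ B (k + 1)) :
    ∃ g : (ℕ → Bool) → XX, Continuous g ∧ (∀ x, g x ∈ bset W) ∧
      (∀ x k, g x ∉ A k) ∧ (∀ x y, x ≠ y → ∀ k, (g x, g y) ∉ B k) := by
  classical
  have hstep : ∀ (n : ℕ) (C : (Fin n → Bool) → Box), ∃ C' : (Fin (n+1) → Bool) → Box,
      (∀ s, bset (C' s) ⊆ bset (C (Fin.init s))) ∧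
      (∀ s, n + 1 ≤ (C' s).1.length ∧ n + 1 ≤ (C' s).2.length) ∧
      (∀ s, bset (C' s) ∩ A n = ∅) ∧
      (∀ s t, s ≠ t → (bset (C' s) ×ˢ bset (C' t)) ∩ B n = ∅) := by
    intro n C
    rcases refine_boxes (fun s : Fin (n+1) → Bool => C (Fin.init s)) (hAi n) (hAc n)
      (hBi n) (hBc n) (n+1) with ⟨C', h1, h2, h3, h4⟩
    exact ⟨C', h1, h2, h3, h4⟩
  choose step hs1 hs2 hs3 hs4 using hstep
  set D : ∀ n : ℕ, (Fin n → Bool) → Box :=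
    fun n => Nat.rec (fun _ => W) (fun n C => step n C) n with hD
  set rs : (ℕ → Bool) → ∀ n : ℕ, (Fin n → Bool) := fun x n (i : Fin n) => x i with hrs
  have hinit : ∀ (x : ℕ → Bool) (n : ℕ), Fin.init (rs x (n+1)) = rs x n := by
    intro x n; funext i; simp [hrs, Fin.init]
  have hchain : ∀ (x : ℕ → Bool) n, bset (D (n+1) (rs x (n+1))) ⊆ bset (D n (rs x n)) := by
    intro x n
    have h := hs1 n (D n) (rs x (n+1))
    rw [hinit x n] at h
    exact h
  have hchainle : ∀ (x : ℕ → Bool) (m n : ℕ), m ≤ n →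
      bset (D n (rs x n)) ⊆ bset (D m (rs x m)) := by
    intro x m n hmn
    induction n, hmn using Nat.le_induction with
    | base => exact Set.Subset.rfl
    | succ n hmn ih => exact (hchain x n).trans ih
  have hlen : ∀ (n : ℕ) (s : Fin n → Bool),
      n ≤ (D n s).1.length ∧ n ≤ (D n s).2.length := by
    intro n s
    cases n with
    | zero => exact ⟨Nat.zero_le _, Nat.zero_le _⟩
    | succ n => exact hs2 n (D n) s
  set g : (ℕ → Bool) → XX := fun x =>
    (fun i => (D (i+1) (rs x (i+1))).1.getD i 0,
     fun i => (D (i+1) (rs x (i+1))).2.getD i 0) with hg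
  have gmem : ∀ (x : ℕ → Bool) (n : ℕ), g x ∈ bset (D n (rs x n)) := by
    intro x n
    constructor
    · intro i hi
      rcases le_or_gt (i+1) n with h | h
      · have hsub := (bset_subset_components (hchainle x (i+1) n h)).1
        have hagree := cyl_subset_agree' hsub i (lt_of_lt_of_le (Nat.lt_succ_self i)
          (hlen (i+1) (rs x (i+1))).1)
        exact hagree.2.symm
      · have hsub := (bset_subset_components (hchainle x n (i+1) (by omega))).1
        have hagree := cyl_subset_agree' hsub i hi
        exact hagree.2
    · intro i hi
      rcases le_or_gt (i+1) n with h | h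
      · have hsub := (bset_subset_components (hchainle x (i+1) n h)).2
        have hagree := cyl_subset_agree' hsub i (lt_of_lt_of_le (Nat.lt_succ_self i)
          (hlen (i+1) (rs x (i+1))).2)
        exact hagree.2.symm
      · have hsub := (bset_subset_components (hchainle x n (i+1) (by omega))).2
        have hagree := cyl_subset_agree' hsub i hi
        exact hagree.2
  have hcont : Continuous g := by
    have hrc : ∀ n : ℕ, Continuous (fun x : ℕ → Bool => rs x n) := by
      intro n
      exact continuous_pi fun j => continuous_apply (j : ℕ)
    refine Continuous.prodMk ?_ ?_
    · refine continuous_pi fun i => ?_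
      have heq : (fun x : ℕ → Bool => (D (i+1) (rs x (i+1))).1.getD i 0) =
          (fun s : Fin (i+1) → Bool => (D (i+1) s).1.getD i 0) ∘ (fun x => rs x (i+1)) := rfl
      rw [heq]
      exact (continuous_of_discreteTopology).comp (hrc (i+1))
    · refine continuous_pi fun i => ?_
      have heq : (fun x : ℕ → Bool => (D (i+1) (rs x (i+1))).2.getD i 0) =
          (fun s : Fin (i+1) → Bool => (D (i+1) s).2.getD i 0) ∘ (fun x => rs x (i+1)) := rfl
      rw [heq]
      exact (continuous_of_discreteTopology).comp (hrc (i+1))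
  refine ⟨g, hcont, ?_, ?_, ?_⟩
  · intro x
    exact gmem x 0
  · intro x k hxA
    have hmem := gmem x (k+1)
    have hempty := hs3 k (D k) (rs x (k+1))
    exact (Set.eq_empty_iff_forall_notMem.1 hempty) (g x) ⟨hmem, hxA⟩
  · intro x y hxy k hB
    obtain ⟨m, hm⟩ : ∃ m, x m ≠ y m := by
      by_contra h; push_neg at h; exact hxy (funext h)
    have hne : rs x (max k m + 1) ≠ rs y (max k m + 1) := by
      intro h
      exact hm (congrFun h ⟨m, by omega⟩)
    have hempty := hs4 (max k m) (D (max k m)) _ _ hne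
    have hBsub : B k ⊆ B (max k m) := by
      have hmono : ∀ a b : ℕ, a ≤ b → B a ⊆ B b := by
        intro a b hab
        induction b, hab using Nat.le_induction with
        | base => exact Set.Subset.rfl
        | succ b hab ih => exact ih.trans (hBm b)
      exact hmono k (max k m) (le_max_left _ _)
    exact (Set.eq_empty_iff_forall_notMem.1 hempty) (g x, g y)
      ⟨Set.mk_mem_prod (gmem x (max k m + 1)) (gmem y (max k m + 1)), hBsub hB⟩

end DST17
section Chain
open Set Topology TopologicalSpace Function Filter

variable {β : Type*} [TopologicalSpace β]

lemma int_union_closed_empty {s t : Set β} (hs : IsClosed s) (hsi : interior s = ∅)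
    (ht : IsClosed t) (hti : interior t = ∅) : interior (s ∪ t) = ∅ := by
  rw [interior_eq_empty_iff_dense_compl] at hsi hti ⊢
  rw [Set.compl_union]
  exact hsi.inter_of_isOpen_left hti hs.isOpen_compl

lemma exists_closed_nwd_chain {M : Set β} (hM : IsMeagre M)
    {E : Set β} (hEc : IsClosed E) (hEi : interior E = ∅) :
    ∃ A : ℕ → Set β, (∀ k, IsClosed (A k)) ∧ (∀ k, interior (A k) = ∅) ∧
      (∀ k, A k ⊆ A (k+1)) ∧ (∀ k, E ⊆ A k) ∧ M ⊆ ⋃ k, A k := by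
  rcases (isMeagre_iff_countable_union_isNowhereDense).1 hM with ⟨S, hSnwd, hScnt, hScov⟩
  obtain ⟨f, hf⟩ := Set.Countable.exists_eq_range (hScnt.insert ∅) ⟨∅, Set.mem_insert _ _⟩
  have hfnwd : ∀ j, interior (closure (f j)) = ∅ := by
    intro j
    have hmem : f j ∈ insert ∅ S := by rw [hf]; exact ⟨j, rfl⟩
    rcases hmem with h | h
    · rw [h, closure_empty, interior_empty]
    · exact hSnwd _ h
  set A : ℕ → Set β := fun k =>
    Nat.rec (E ∪ closure (f 0)) (fun k Ak => Ak ∪ closure (f (k+1))) k with hA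
  have hAc : ∀ k, IsClosed (A k) := by
    intro k
    induction k with
    | zero => exact hEc.union isClosed_closure
    | succ k ih => exact ih.union isClosed_closure
  have hAi : ∀ k, interior (A k) = ∅ := by
    intro k
    induction k with
    | zero => exact int_union_closed_empty hEc hEi isClosed_closure (hfnwd 0)
    | succ k ih => exact int_union_closed_empty (hAc k) ih isClosed_closure (hfnwd (k+1))
  have hclsub : ∀ j, closure (f j) ⊆ A j := by
    intro j
    cases j with
    | zero => exact Set.subset_union_right
    | succ j => exact Set.subset_union_right
  refine ⟨A, hAc, hAi, fun k => Set.subset_union_left, ?_, ?_⟩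
  · intro k
    induction k with
    | zero => exact Set.subset_union_left
    | succ k ih => exact ih.trans Set.subset_union_left
  · intro m hm
    rcases hScov hm with ⟨t, htS, hmt⟩
    have : t ∈ insert ∅ S := Set.mem_insert_of_mem _ htS
    rw [hf] at this
    rcases this with ⟨j, rfl⟩
    exact Set.mem_iUnion.2 ⟨j, hclsub j (subset_closure hmt)⟩

end Chain

theorem stmt_17
    (F : Set (((ℕ → ℕ) × (ℕ → ℕ)) × ℝ)) (hF : MeasurableSet F)
    (U V : Set (ℕ → ℕ))
    (hU : ∃ (s : ℕ → ℕ) (n : ℕ), U = {x | ∀ i < n, x i = s i})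
    (hV : ∃ (s : ℕ → ℕ) (n : ℕ), V = {x | ∀ i < n, x i = s i})
    (ha : IsMeagre {p ∈ U ×ˢ V | {z : ℝ | (p, z) ∈ F} = ∅})
    (hb : IsMeagre {p ∈ U ×ˢ V | ¬ {z : ℝ | (p, z) ∈ F}.Countable})
    (hc : ∀ z : ℝ, IsMeagre {p : (ℕ → ℕ) × (ℕ → ℕ) | (p, z) ∈ F}) :
    ∃ P : Set ((ℕ → ℕ) × (ℕ → ℕ)),
      Perfect P ∧ P.Nonempty ∧ P ⊆ U ×ˢ V ∧
      (∀ p ∈ P, {z : ℝ | (p, z) ∈ F}.Nonempty) ∧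
      ∀ p ∈ P, ∀ p' ∈ P, p ≠ p' →
        Disjoint {z : ℝ | (p, z) ∈ F} {z : ℝ | (p', z) ∈ F} ∧ p.1 ≠ p'.1 := by
  classical
  open DST17 in
  obtain ⟨sU, nU, hUeq⟩ := hU
  obtain ⟨sV, nV, hVeq⟩ := hV
  set W : DST17.Box := (DST17.seg sU nU, DST17.seg sV nV) with hW
  have hWU : DST17.cyl W.1 = U := by rw [hW, DST17.cyl_seg, hUeq]; rfl
  have hWV : DST17.cyl W.2 = V := by rw [hW, DST17.cyl_seg, hVeq]; rfl
  have hWset : DST17.bset W = U ×ˢ V := by rw [DST17.bset, hWU, hWV]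
  have hUVopen : IsOpen (U ×ˢ V) := by rw [← hWset]; exact DST17.isOpen_bset W
  -- the "equal first coordinate" relation
  set E : Set (DST17.XX × DST17.XX) := {pq | pq.1.1 = pq.2.1} with hE
  have hEc : IsClosed E :=
    isClosed_eq (continuous_fst.comp continuous_fst) (continuous_fst.comp continuous_snd)
  have hEi : interior E = ∅ := by
    rw [Set.eq_empty_iff_forall_notMem]
    rintro ⟨p, q⟩ hpq
    have hOq : IsOpen {q' : DST17.XX | (p, q') ∈ interior E} :=
      isOpen_interior.preimage (Continuous.prodMk_right p)
    have hqO : q ∈ {q' : DST17.XX | (p, q') ∈ interior E} := hpq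
    rcases mem_nhds_prod_iff'.1 (hOq.mem_nhds hqO) with ⟨U₂, V₂, hU₂, hq1, hV₂, hq2, hsub⟩
    rcases DST17.exists_cylinder_subset (hU₂.mem_nhds hq1) with ⟨n, hn⟩
    set q1' : ℕ → ℕ := Function.update q.1 n (q.1 n + 1) with hq1'
    have hmem : (p, ((q1', q.2) : DST17.XX)) ∈ interior E :=
      hsub ⟨hn (PiNat.update_mem_cylinder _ _ _), hq2⟩
    have h1 : p.1 = q1' := (interior_subset (s := E) hmem : (p, ((q1', q.2) : DST17.XX)) ∈ E)
    have h2 : p.1 = q.1 := (interior_subset (s := E) hpq : (p, q) ∈ E)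
    have : q1' n = q.1 n := by rw [← h1, h2]
    rw [hq1', Function.update_self] at this
    omega
  -- the relation of intersecting sections
  set R' : Set (DST17.XX × DST17.XX) :=
    {pq | pq.1 ∈ U ×ˢ V ∧ pq.2 ∈ U ×ˢ V ∧ ∃ z : ℝ, (pq.1, z) ∈ F ∧ (pq.2, z) ∈ F} with hR'
  have hR'meagre : IsMeagre R' := by
    set Fbig : Set ((DST17.XX × DST17.XX) × ℝ) :=
      {w | w.1.1 ∈ U ×ˢ V ∧ w.1.2 ∈ U ×ˢ V ∧ (w.1.1, w.2) ∈ F ∧ (w.1.2, w.2) ∈ F} with hFbig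
    have hFbigm : MeasurableSet Fbig := by
      have h1 : MeasurableSet {w : (DST17.XX × DST17.XX) × ℝ | w.1.1 ∈ U ×ˢ V} :=
        hUVopen.measurableSet.preimage (measurable_fst.fst)
      have h2 : MeasurableSet {w : (DST17.XX × DST17.XX) × ℝ | w.1.2 ∈ U ×ˢ V} :=
        hUVopen.measurableSet.preimage (measurable_fst.snd)
      have h3 : MeasurableSet {w : (DST17.XX × DST17.XX) × ℝ | (w.1.1, w.2) ∈ F} :=
        hF.preimage ((measurable_fst.fst).prodMk measurable_snd)
      have h4 : MeasurableSet {w : (DST17.XX × DST17.XX) × ℝ | (w.1.2, w.2) ∈ F} :=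
        hF.preimage ((measurable_fst.snd).prodMk measurable_snd)
      have : Fbig = _ ∩ (_ ∩ (_ ∩ _)) := rfl
      exact h1.inter (h2.inter (h3.inter h4))
    have hana : MeasureTheory.AnalyticSet R' := by
      have himg : R' = Prod.fst '' Fbig := by
        ext pq
        constructor
        · rintro ⟨h1, h2, z, hz1, hz2⟩
          exact ⟨(pq, z), ⟨h1, h2, hz1, hz2⟩, rfl⟩
        · rintro ⟨⟨pq', z⟩, ⟨h1, h2, hz1, hz2⟩, rfl⟩
          exact ⟨h1, h2, z, hz1, hz2⟩
      rw [himg]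
      exact (hFbigm.analyticSet).image_of_continuous continuous_fst
    have hBP : BaireMeasurableSet R' := DST17.analyticSet_baireMeasurableSet hana
    refine meager_of_baireMeasurable_sections hBP hb ?_
    intro p hp
    by_cases hpW : p ∈ U ×ˢ V
    · have hcnt : {z : ℝ | (p, z) ∈ F}.Countable := by
        by_contra h
        exact hp ⟨hpW, h⟩
      have hsub : {q | (p, q) ∈ R'} ⊆
          ⋃ z ∈ {z : ℝ | (p, z) ∈ F}, {q : DST17.XX | (q, z) ∈ F} := by
        rintro q ⟨-, -, z, hz1, hz2⟩
        exact Set.mem_biUnion hz1 hz2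
      exact (myIsMeagre_biUnion hcnt (fun z _ => hc z)).mono hsub
    · have hempty : {q | (p, q) ∈ R'} = ∅ := by
        rw [Set.eq_empty_iff_forall_notMem]
        rintro q ⟨h1, -, -⟩
        exact hpW h1
      rw [hempty]
      exact IsMeagre.empty
  obtain ⟨A, hAc, hAi, _hAm, -, hAcov⟩ := exists_closed_nwd_chain ha isClosed_empty interior_empty
  obtain ⟨B, hBc, hBi, hBm, hBE, hBcov⟩ := exists_closed_nwd_chain hR'meagre hEc hEi
  obtain ⟨g, hgc, hgW, hgA, hgB⟩ := DST17.mycielski_boxes W A B hAc hAi hBc hBi hBm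
  have hgUV : ∀ x, g x ∈ U ×ˢ V := by
    intro x
    have := hgW x
    rwa [hWset] at this
  have hgne1 : ∀ x y, x ≠ y → (g x).1 ≠ (g y).1 := by
    intro x y hxy h1
    exact hgB x y hxy 0 (hBE 0 h1)
  have hnotR' : ∀ x y, x ≠ y → (g x, g y) ∉ R' := by
    intro x y hxy hR
    rcases Set.mem_iUnion.1 (hBcov hR) with ⟨k, hk⟩
    exact hgB x y hxy k hk
  refine ⟨Set.range g, ⟨(isCompact_range hgc).isClosed, ?_⟩,
    ⟨g (fun _ => false), Set.mem_range_self _⟩, ?_, ?_, ?_⟩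
  · -- Preperfect
    rintro p ⟨x, rfl⟩
    rw [accPt_iff_nhds]
    intro Unb hUnb
    obtain ⟨n, hn⟩ := DST17.exists_cylinder_subset (hgc.continuousAt.preimage_mem_nhds hUnb)
    set y : ℕ → Bool := Function.update x n (!(x n)) with hy
    have hyx : y ≠ x := by
      intro h
      have := congrFun h n
      rw [hy, Function.update_self] at this
      exact Bool.not_ne_self (x n) this
    refine ⟨g y, ⟨hn (PiNat.update_mem_cylinder _ _ _), Set.mem_range_self _⟩, ?_⟩
    intro h
    exact hgne1 y x hyx (congrArg Prod.fst h)
  · rintro p ⟨x, rfl⟩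
    exact hgUV x
  · rintro p ⟨x, rfl⟩
    rw [Set.nonempty_iff_ne_empty]
    intro hempty
    have : g x ∈ {p ∈ U ×ˢ V | {z : ℝ | (p, z) ∈ F} = ∅} := ⟨hgUV x, hempty⟩
    rcases Set.mem_iUnion.1 (hAcov this) with ⟨k, hk⟩
    exact hgA x k hk
  · rintro p ⟨x, rfl⟩ p' ⟨y, rfl⟩ hne
    have hxy : x ≠ y := fun h => hne (congrArg g h)
    constructor
    · rw [Set.disjoint_left]
      intro z hz1 hz2
      exact hnotR' x y hxy ⟨hgUV x, hgUV y, z, hz1, hz2⟩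
    · exact hgne1 x y hxy
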